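/- Let Δ be a bounded, co-bounded m-invariant set and w ∈ [m]^n with w · Δ = Δ + n. Then the set of elements removed during the action of w (i.e., Δ \ (Δ + n)) is exactly the set of n-generators of the original set Δ, and each step removes exactly one n-generator of Δ. -/
import Mathlib


/-- The shift of a set of integers: `Δ + k`. -/
def shiftSet (Δ : Set ℤ) (k : ℤ) : Set ℤ := (· + k) '' Δ

/-- `Δ` is `k`-invariant if `Δ + k ⊆ Δ`. -/
def Invariant (k : ℤ) (Δ : Set ℤ) : Prop := shiftSet Δ k ⊆ Δ

/-- `Δ` is bounded (has a minimum element). -/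
def HasMin (Δ : Set ℤ) : Prop := ∃ a ∈ Δ, ∀ x ∈ Δ, a ≤ x

/-- `Δ` is co-bounded: contains all sufficiently large integers. -/
def CoBounded (Δ : Set ℤ) : Prop := ∃ N : ℤ, ∀ x : ℤ, N ≤ x → x ∈ Δ

/-- The `k`-generators of `Δ`: elements `a ∈ Δ` with `a - k ∉ Δ`, i.e. `Δ \ (Δ + k)`. -/
def gens (k : ℤ) (Δ : Set ℤ) : Set ℤ := Δ \ shiftSet Δ k

/-- The `(j+1)`-st smallest element of a set of integers. -/
noncomputable def nthSmallest : ℕ → Set ℤ → ℤ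
  | 0, S => sInf S
  | j+1, S => nthSmallest j (S \ {sInf S})

/-- The letter `j ∈ [m]` acts on an `m`-invariant set by removing its `(j+1)`-st
smallest `m`-generator. -/
noncomputable def letterAct (m : ℤ) (j : ℕ) (Δ : Set ℤ) : Set ℤ :=
  Δ \ {nthSmallest j (gens m Δ)}

/-- `steps m p Δ i = p_{i-1} ⋯ p_1 p_0 ⋅ Δ`: the word acts one letter at a
time, the letter `p 0` (rightmost) acting first. -/
noncomputable def steps (m : ℤ) (p : ℕ → ℕ) (Δ : Set ℤ) : ℕ → Set ℤ
  | 0 => Δ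
  | i+1 => letterAct m (p i) (steps m p Δ i)

/-- If `w ⋅ Δ = Δ + n`, then the set of elements removed during the action is exactly
the set of `n`-generators of `Δ`, and each step removes exactly one `n`-generator of `Δ`. -/
lemma steps_succ_subset (m : ℤ) (p : ℕ → ℕ) (Δ : Set ℤ) (i : ℕ) :
    steps m p Δ (i+1) ⊆ steps m p Δ i := Set.diff_subset

lemma steps_subset (m : ℤ) (p : ℕ → ℕ) (Δ : Set ℤ) : ∀ i, steps m p Δ i ⊆ Δ
  | 0 => subset_rfl
  | i+1 => (steps_succ_subset m p Δ i).trans (steps_subset m p Δ i)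

lemma telescope (m : ℤ) (p : ℕ → ℕ) (Δ : Set ℤ) :
    ∀ k, (⋃ i ∈ Finset.range k, (steps m p Δ i \ steps m p Δ (i+1))) = Δ \ steps m p Δ k
  | 0 => by simp [steps]
  | k+1 => by
      rw [Finset.range_add_one, Finset.set_biUnion_insert, telescope m p Δ k, Set.union_comm,
        Set.diff_union_diff_cancel (steps_subset m p Δ k) (steps_succ_subset m p Δ k)]

lemma exists_min_gen (n : ℤ) (hn : 0 < n) (Δ : Set ℤ) (hb : HasMin Δ) (hc : CoBounded Δ)
    (r : ℤ) (hr0 : 0 ≤ r) (hrn : r < n) :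
    ∃ x ∈ gens n Δ, x % n = r := by
  obtain ⟨a, haΔ, ha⟩ := hb
  obtain ⟨N, hN⟩ := hc
  set S : Set ℤ := {y | y ∈ Δ ∧ y % n = r} with hS
  have hSne : S.Nonempty := by
    refine ⟨r + n * max (N - r) 0, hN _ ?_, ?_⟩
    · rcases le_or_gt N r with h | h
      · have : (0:ℤ) ≤ n * max (N - r) 0 := mul_nonneg hn.le (le_max_right _ _)
        linarith
      · rw [max_eq_left (by linarith : (0:ℤ) ≤ N - r)]
        nlinarith
    · simp [Int.add_mul_emod_self_left, Int.emod_eq_of_lt hr0 hrn]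
  have hSbdd : BddBelow S := ⟨a, fun y hy => ha y hy.1⟩
  have hmem : sInf S ∈ S := Int.csInf_mem hSne hSbdd
  refine ⟨sInf S, ⟨hmem.1, ?_⟩, hmem.2⟩
  rintro ⟨z, hz, hzeq⟩
  simp only at hzeq
  have hzS : z ∈ S := by
    refine ⟨hz, ?_⟩
    have hzv : z = sInf S - n := by linarith
    rw [hzv, Int.sub_emod, Int.emod_self, sub_zero, Int.emod_emod_of_dvd _ dvd_rfl]
    exact hmem.2
  have := csInf_le hSbdd hzS
  linarith

theorem removed_elements_are_n_generators (m n : ℕ) (hm : 0 < m) (hn : 0 < n) (Δ : Set ℤ)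
    (hI : Invariant m Δ) (hb : HasMin Δ) (hc : CoBounded Δ)
    (p : ℕ → ℕ) (hp : ∀ i < n, p i < m)
    (hact : steps m p Δ n = shiftSet Δ n) :
    (⋃ i ∈ Finset.range n, (steps m p Δ i \ steps m p Δ (i+1))) = gens n Δ ∧
    ∀ i < n, ∃ x ∈ gens n Δ, steps m p Δ i \ steps m p Δ (i+1) = {x} := by
  classical
  have hnz : (0:ℤ) < (n:ℤ) := by exact_mod_cast hn
  have hU : (⋃ i ∈ Finset.range n, (steps m p Δ i \ steps m p Δ (i+1))) = gens (n:ℤ) Δ := by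
    rw [telescope m p Δ n, hact]; rfl
  refine ⟨hU, ?_⟩
  -- each step removes at most the element x i
  set x : ℕ → ℤ := fun i => nthSmallest (p i) (gens m (steps m p Δ i)) with hxdef
  have hstep : ∀ i, steps m p Δ (i+1) = steps m p Δ i \ {x i} := fun i => rfl
  have hD : ∀ i, steps m p Δ i \ steps m p Δ (i+1) ⊆ {x i} := by
    intro i y hy
    rw [hstep i] at hy
    simp only [Set.mem_diff, Set.mem_singleton_iff, not_and, not_not] at hy ⊢
    exact hy.2 hy.1
  -- a family of n distinct n-generators
  have hex : ∀ r : ℕ, r < n → ∃ y ∈ gens (n:ℤ) Δ, y % (n:ℤ) = r := by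
    intro r hr
    exact exists_min_gen n hnz Δ hb hc r (by exact_mod_cast Nat.zero_le r)
      (by exact_mod_cast hr)
  set g : ℕ → ℤ := fun r => if h : r < n then (hex r h).choose else 0 with hgdef
  have hg : ∀ r < n, g r ∈ gens (n:ℤ) Δ ∧ g r % (n:ℤ) = r := by
    intro r hr
    simp only [hgdef, dif_pos hr]
    exact ⟨(hex r hr).choose_spec.1, (hex r hr).choose_spec.2⟩
  have hginj : Set.InjOn g (Finset.range n) := by
    intro r hr s hs hrs
    simp only [Finset.coe_range, Set.mem_Iio] at hr hs
    have h1 := (hg r hr).2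
    have h2 := (hg s hs).2
    rw [hrs] at h1
    exact_mod_cast h1.symm.trans h2
  -- key: each step removes at least one element
  have key : ∀ i < n, (steps m p Δ i \ steps m p Δ (i+1)).Nonempty := by
    intro i0 hi0
    rw [Set.nonempty_iff_ne_empty]
    intro hemp
    set F : Finset ℤ := ((Finset.range n).erase i0).image x with hF
    have hcov : gens (n:ℤ) Δ ⊆ ↑F := by
      intro y hy
      rw [← hU] at hy
      simp only [Set.mem_iUnion] at hy
      obtain ⟨i, hi, hyi⟩ := hy
      have hii0 : i ≠ i0 := by
        intro h; rw [h, hemp] at hyi; exact hyi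
      have : y = x i := hD i hyi
      simp only [hF, Finset.coe_image, Set.mem_image]
      exact ⟨i, Finset.mem_coe.mpr (Finset.mem_erase.mpr ⟨hii0, hi⟩), this.symm⟩
    have hmaps : ∀ r ∈ Finset.range n, g r ∈ F := by
      intro r hr
      exact hcov (hg r (Finset.mem_range.mp hr)).1
    have h1 : (Finset.range n).card ≤ F.card :=
      Finset.card_le_card_of_injOn g hmaps hginj
    have h2 : F.card ≤ ((Finset.range n).erase i0).card := Finset.card_image_le
    rw [Finset.card_erase_of_mem (Finset.mem_range.mpr hi0), Finset.card_range] at h2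
    rw [Finset.card_range] at h1
    omega
  intro i hi
  obtain ⟨y, hy⟩ := key i hi
  refine ⟨y, ?_, ?_⟩
  · rw [← hU]
    exact Set.mem_biUnion (Finset.mem_range.mpr hi) hy
  · have hyx : y = x i := hD i hy
    apply Set.eq_singleton_iff_nonempty_unique_mem.mpr
    exact ⟨⟨y, hy⟩, fun z hz => (hD i hz).trans hyx.symm⟩
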